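/- arXiv:2503.05662 — 3 statements merged into one kernel-verified Lean document; each statement's English description precedes it below -/
import Mathlib

section
/- Let 1 < β < β' < K be reals and t > 0. Suppose nonnegative reals x_1, ..., x_K satisfy, for every i ∈ [K], x_i > (β'−β)t/(K−β') + (β'/(K−β'))·Σ_{j<i} x_j. Then for every i ∈ [K], x_i > ((β'−β)t/K)·exp(β'·i/K). -/
open Finset

/-- Stability technical lemma: if `x_i > (β'-β)t/(K-β') + (β'/(K-β')) ∑_{j<i} x_j`
for all `i ∈ [K]`, then `x_i > ((β'-β)t/K) exp(β' i / K)`. -/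
theorem stability_technical (K : ℕ) (β β' t : ℝ)
    (hβ : 1 < β) (hββ' : β < β') (hβ'K : β' < K) (ht : 0 < t)
    (x : ℕ → ℝ)
    (hx : ∀ i, 1 ≤ i → i ≤ K →
      (β' - β) * t / (K - β') + β' / (K - β') * ∑ j ∈ Finset.Ico 1 i, x j < x i) :
    ∀ i, 1 ≤ i → i ≤ K →
      (β' - β) * t / K * Real.exp (β' * i / K) < x i := by
  have hK : (0:ℝ) < (K:ℝ) - β' := by linarith
  have hKpos : (0:ℝ) < (K:ℝ) := by linarith
  have hβ'pos : (0:ℝ) < β' := by linarith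
  set c := (β' - β) * t / ((K:ℝ) - β') with hc
  set r := β' / ((K:ℝ) - β') with hr
  have hcpos : 0 < c := div_pos (mul_pos (by linarith) ht) hK
  have hrpos : 0 < r := div_pos hβ'pos hK
  have key : ∀ i, i ≤ K → c * ((1+r)^i - 1) ≤ r * ∑ j ∈ Finset.Ico 1 (i+1), x j := by
    intro i
    induction i with
    | zero => intro _; simp
    | succ n ih =>
      intro hn
      have h1 := ih (Nat.le_of_succ_le hn)
      have h2 := hx (n+1) (by omega) hn
      rw [Finset.sum_Ico_succ_top (by omega), pow_succ]
      nlinarith [mul_le_mul_of_nonneg_left h1 (by linarith : (0:ℝ) ≤ 1+r),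
        mul_lt_mul_of_pos_left h2 hrpos]
  intro i hi1 hiK
  obtain ⟨j, rfl⟩ : ∃ j, i = j + 1 := ⟨i - 1, (Nat.sub_add_cancel hi1).symm⟩
  have h2 := hx (j+1) hi1 hiK
  have h1 := key j (by omega)
  have hx1 : c * (1+r)^j < x (j+1) := by nlinarith
  have h1r : 1 + r = (K:ℝ)/((K:ℝ)-β') := by
    rw [hr]; field_simp; ring
  have hE : Real.exp (β'/K) ≤ (K:ℝ)/((K:ℝ)-β') := by
    have h0 : -(β'/K) + 1 ≤ Real.exp (-(β'/K)) := Real.add_one_le_exp _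
    have hq : (K:ℝ) * (β'/K) = β' := by field_simp
    have h4 : (K:ℝ) - β' ≤ K * Real.exp (-(β'/K)) := by
      nlinarith [mul_le_mul_of_nonneg_left h0 hKpos.le]
    rw [le_div_iff₀ hK]
    have h3 : Real.exp (β'/K) * Real.exp (-(β'/K)) = 1 := by
      rw [← Real.exp_add]; simp
    nlinarith [mul_le_mul_of_nonneg_left h4 (Real.exp_pos (β'/K)).le]
  have hEi : Real.exp (β' * ((j:ℝ)+1) / K) ≤ (1+r)^(j+1) := by
    rw [h1r, show β' * ((j:ℝ)+1) / K = ((j+1:ℕ):ℝ) * (β'/K) by push_cast; ring,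
      Real.exp_nat_mul]
    exact pow_le_pow_left₀ (Real.exp_pos _).le hE (j+1)
  have hci : (β' - β) * t / K * (1+r)^(j+1) = c * (1+r)^j := by
    rw [pow_succ, h1r, hc]
    field_simp
  have hnn : (0:ℝ) ≤ (β' - β) * t / K :=
    div_nonneg (mul_nonneg (by linarith) ht.le) hKpos.le
  push_cast
  calc (β' - β) * t / K * Real.exp (β' * ((j:ℝ)+1) / K)
      ≤ (β' - β) * t / K * (1+r)^(j+1) := mul_le_mul_of_nonneg_left hEi hnn
    _ = c * (1+r)^j := hci
    _ < x (j+1) := hx1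
end

section
/- Let f : (0,1] → ℝ be L-Lipschitz. Let a_i, a_j, b, c_i, c_j be reals with 1 ≤ a_i, a_j, 0 < b, 0 ≤ c_i, c_j ≤ A, and (a_i + s)/(b + A·s + c_i), (a_j + s)/(b + A·s + c_j) ∈ (0,1] for all s in a range. Then for any m ≥ 1, |(1/m)·Σ_{ℓ=1}^{m} [ f((a_i + ℓ−1)/(b + A(ℓ−1) + c_i)) − f((a_j + ℓ−1)/(b + A(ℓ−1) + c_j)) ]| ≤ (L(A + |a_i − a_j|)/m)·Σ_{ℓ=1}^{m} 1/(b + A(ℓ−1)). -/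
open Finset

/-- Bias-error bound for the elimination algorithm: the averaged difference of the
Lipschitz bias function applied to the two arms' play fractions is controlled by
`(L (A + |a_i - a_j|)/m) ∑_ℓ 1/(b + A ℓ)`. -/
theorem elimination_bias_error_bound
    (f : ℝ → ℝ) (L : ℝ) (hL : 0 ≤ L)
    (hf : ∀ x ∈ Set.Ioc (0 : ℝ) 1, ∀ y ∈ Set.Ioc (0 : ℝ) 1, |f x - f y| ≤ L * |x - y|)
    (A : ℝ) (hA : 1 ≤ A)
    (ai aj b ci cj : ℝ) (hai : 1 ≤ ai) (haj : 1 ≤ aj) (hb : 0 < b)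
    (hci : ci ∈ Set.Icc (0 : ℝ) A) (hcj : cj ∈ Set.Icc (0 : ℝ) A)
    (m : ℕ) (hm : 1 ≤ m)
    (hfraci : ∀ ℓ ∈ Finset.range m,
      (ai + ℓ) / (b + A * ℓ + ci) ∈ Set.Ioc (0 : ℝ) 1)
    (hfracj : ∀ ℓ ∈ Finset.range m,
      (aj + ℓ) / (b + A * ℓ + cj) ∈ Set.Ioc (0 : ℝ) 1) :
    |(1 / m : ℝ) * ∑ ℓ ∈ Finset.range m,
        (f ((ai + ℓ) / (b + A * ℓ + ci)) - f ((aj + ℓ) / (b + A * ℓ + cj)))|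
      ≤ L * (A + |ai - aj|) / m * ∑ ℓ ∈ Finset.range m, 1 / (b + A * ℓ) := by
  obtain ⟨hci0, hciA⟩ := hci
  obtain ⟨hcj0, hcjA⟩ := hcj
  have hm0 : (0 : ℝ) < m := by exact_mod_cast hm
  have key : ∀ ℓ ∈ Finset.range m,
      |f ((ai + ℓ) / (b + A * ℓ + ci)) - f ((aj + ℓ) / (b + A * ℓ + cj))|
        ≤ L * (A + |ai - aj|) * (1 / (b + A * ℓ)) := by
    intro ℓ hℓ
    set s : ℝ := (ℓ : ℝ) with hs
    have hs0 : (0 : ℝ) ≤ s := Nat.cast_nonneg ℓ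
    have hD : 0 < b + A * s := by nlinarith
    have hD1 : 0 < b + A * s + ci := by linarith
    have hD2 : 0 < b + A * s + cj := by linarith
    have hxi := hfraci ℓ hℓ
    have hxj := hfracj ℓ hℓ
    have hxi1 : ai + s ≤ b + A * s + ci := by
      have := hxi.2
      rwa [div_le_one hD1] at this
    have hxj1 : aj + s ≤ b + A * s + cj := by
      have := hxj.2
      rwa [div_le_one hD2] at this
    have hdiff : |(ai + s) / (b + A * s + ci) - (aj + s) / (b + A * s + cj)|
        ≤ (A + |ai - aj|) / (b + A * s) := by
      have heq : (ai + s) / (b + A * s + ci) - (aj + s) / (b + A * s + cj)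
          = (ai - aj) / (b + A * s + ci)
            + ((aj + s) / (b + A * s + cj)) * ((cj - ci) / (b + A * s + ci)) := by
        field_simp
        ring
      have h1 : |(ai - aj) / (b + A * s + ci)| ≤ |ai - aj| / (b + A * s) := by
        rw [abs_div, abs_of_pos hD1, div_le_div_iff₀ hD1 hD]
        nlinarith [abs_nonneg (ai - aj)]
      have h2 : |((aj + s) / (b + A * s + cj)) * ((cj - ci) / (b + A * s + ci))|
          ≤ A / (b + A * s) := by
        rw [abs_mul, abs_div, abs_div, abs_of_pos hD1, abs_of_pos hD2]
        have hf1 : |aj + s| / (b + A * s + cj) ≤ 1 := by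
          rw [abs_of_nonneg (by linarith), div_le_one hD2]
          exact hxj1
        have hf2 : |cj - ci| / (b + A * s + ci) ≤ A / (b + A * s) := by
          have hcc : |cj - ci| ≤ A := abs_le.mpr ⟨by linarith, by linarith⟩
          rw [div_le_div_iff₀ hD1 hD]
          nlinarith [abs_nonneg (cj - ci)]
        calc |aj + s| / (b + A * s + cj) * (|cj - ci| / (b + A * s + ci))
            ≤ 1 * (A / (b + A * s)) := by
              apply mul_le_mul hf1 hf2 (by positivity) zero_le_one
          _ = A / (b + A * s) := one_mul _
      have hsum : (A + |ai - aj|) / (b + A * s)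
          = A / (b + A * s) + |ai - aj| / (b + A * s) := by ring
      rw [heq]
      calc _ ≤ _ := abs_add_le _ _
        _ ≤ (A + |ai - aj|) / (b + A * s) := by rw [hsum]; linarith
    calc |f ((ai + s) / (b + A * s + ci)) - f ((aj + s) / (b + A * s + cj))|
        ≤ L * |(ai + s) / (b + A * s + ci) - (aj + s) / (b + A * s + cj)| :=
          hf _ hxi _ hxj
      _ ≤ L * ((A + |ai - aj|) / (b + A * s)) := by gcongr
      _ = L * (A + |ai - aj|) * (1 / (b + A * s)) := by ring
  calc |(1 / m : ℝ) * ∑ ℓ ∈ Finset.range m,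
        (f ((ai + ℓ) / (b + A * ℓ + ci)) - f ((aj + ℓ) / (b + A * ℓ + cj)))|
      = (1 / m : ℝ) * |∑ ℓ ∈ Finset.range m,
        (f ((ai + ℓ) / (b + A * ℓ + ci)) - f ((aj + ℓ) / (b + A * ℓ + cj)))| := by
        rw [abs_mul, abs_of_pos (by positivity)]
    _ ≤ (1 / m : ℝ) * ∑ ℓ ∈ Finset.range m,
        |f ((ai + ℓ) / (b + A * ℓ + ci)) - f ((aj + ℓ) / (b + A * ℓ + cj))| := by
        gcongr
        exact Finset.abs_sum_le_sum_abs _ _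
    _ ≤ (1 / m : ℝ) * ∑ ℓ ∈ Finset.range m,
        L * (A + |ai - aj|) * (1 / (b + A * ℓ)) := by
        gcongr with ℓ hℓ
        exact key ℓ hℓ
    _ = L * (A + |ai - aj|) / m * ∑ ℓ ∈ Finset.range m, 1 / (b + A * ℓ) := by
        rw [← Finset.mul_sum]
        ring
end

section
/- Let f : [0,1] → [0,1] be nondecreasing. Suppose T⁰_i ≥ 1 for each i ∈ [K], t⁰ = Σ_i T⁰_i, and consider fractions of the form (T⁰_i + P + s)/(t⁰ + Q + K·s + b) where P, Q, s ≥ 0 are reals with Q ≤ K·P and 0 ≤ b ≤ K−1. Then this fraction is at least min{ T⁰_i/(t⁰ + b), 1/K } ≥ T⁰_min/(t⁰ + K − 1), and consequently f applied to the fraction is at least f(T⁰_min/(t⁰ + K − 1)). -/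
open Finset

/-- Lower bound on the play fraction of the phased elimination algorithm, and its
consequence for a nondecreasing bias function `f : [0,1] → [0,1]`. -/
theorem elimination_fraction_lower_bound
    (K : ℕ) (hK : 0 < K) (T0 : Fin K → ℕ) (hT0 : ∀ i, 1 ≤ T0 i) (i : Fin K)
    (P Q s b : ℝ) (hP : 0 ≤ P) (hQ : 0 ≤ Q) (hs : 0 ≤ s)
    (hQP : Q ≤ K * P) (hb0 : 0 ≤ b) (hb : b ≤ (K : ℝ) - 1)
    (f : ℝ → ℝ) (hmono : MonotoneOn f (Set.Icc (0 : ℝ) 1))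
    (hrange : ∀ x ∈ Set.Icc (0 : ℝ) 1, f x ∈ Set.Icc (0 : ℝ) 1)
    (hfrac_le_one :
      ((T0 i : ℝ) + P + s) / ((∑ j, T0 j : ℕ) + Q + K * s + b) ≤ 1) :
    min ((T0 i : ℝ) / ((∑ j, T0 j : ℕ) + b)) (1 / K)
        ≤ ((T0 i : ℝ) + P + s) / ((∑ j, T0 j : ℕ) + Q + K * s + b) ∧
      ((⨅ j, (T0 j : ℝ)) / ((∑ j, T0 j : ℕ) + K - 1)
        ≤ min ((T0 i : ℝ) / ((∑ j, T0 j : ℕ) + b)) (1 / K)) ∧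
      f ((⨅ j, (T0 j : ℝ)) / ((∑ j, T0 j : ℕ) + K - 1))
        ≤ f (((T0 i : ℝ) + P + s) / ((∑ j, T0 j : ℕ) + Q + K * s + b)) := by
  haveI : Nonempty (Fin K) := ⟨⟨0, hK⟩⟩
  set t0 : ℝ := ((∑ j, T0 j : ℕ) : ℝ) with ht0
  have hK1 : (1 : ℝ) ≤ K := by exact_mod_cast hK
  have hKpos : (0 : ℝ) < K := by linarith
  have hTi1 : (1 : ℝ) ≤ (T0 i : ℝ) := by exact_mod_cast hT0 i
  have hKt0 : (K : ℝ) ≤ t0 := by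
    have : K ≤ ∑ j, T0 j := by
      calc K = ∑ _j : Fin K, 1 := by simp
        _ ≤ ∑ j, T0 j := Finset.sum_le_sum fun j _ => hT0 j
    rw [ht0]; exact_mod_cast this
  have hTit0 : (T0 i : ℝ) ≤ t0 := by
    have : T0 i ≤ ∑ j, T0 j :=
      Finset.single_le_sum (fun j _ => Nat.zero_le _) (Finset.mem_univ i)
    rw [ht0]; exact_mod_cast this
  have ht0pos : (0 : ℝ) < t0 := by linarith
  have hKs : (0 : ℝ) ≤ K * s := mul_nonneg hKpos.le hs
  have hDpos : (0 : ℝ) < t0 + Q + K * s + b := by linarith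
  have hd1pos : (0 : ℝ) < t0 + b := by linarith
  have hd2pos : (0 : ℝ) < t0 + K - 1 := by linarith
  -- facts about the infimum
  have hbdd : BddBelow (Set.range fun j => (T0 j : ℝ)) :=
    (Set.finite_range _).bddBelow
  have hinf_le : ∀ j, (⨅ j, (T0 j : ℝ)) ≤ (T0 j : ℝ) := fun j => ciInf_le hbdd j
  have hinf1 : (1 : ℝ) ≤ ⨅ j, (T0 j : ℝ) :=
    le_ciInf fun j => by exact_mod_cast hT0 j
  have hKinf : (K : ℝ) * (⨅ j, (T0 j : ℝ)) ≤ t0 := by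
    have : ∑ _j : Fin K, (⨅ j, (T0 j : ℝ)) ≤ ∑ j, (T0 j : ℝ) :=
      Finset.sum_le_sum fun j _ => hinf_le j
    simpa [ht0, mul_comm] using this
  set m : ℝ := min ((T0 i : ℝ) / (t0 + b)) (1 / K) with hm
  -- part 1
  have hm1 : m ≤ (T0 i : ℝ) / (t0 + b) := min_le_left _ _
  have hm2 : m ≤ 1 / K := min_le_right _ _
  have hm0 : 0 ≤ m := le_min (div_nonneg (by linarith) hd1pos.le)
    (by positivity)
  have part1 : m ≤ ((T0 i : ℝ) + P + s) / (t0 + Q + K * s + b) := by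
    rw [le_div_iff₀ hDpos]
    have h1 : m * (t0 + b) ≤ (T0 i : ℝ) := by
      have := mul_le_mul_of_nonneg_right hm1 hd1pos.le
      rwa [div_mul_cancel₀ _ hd1pos.ne'] at this
    have h2 : m * (Q + K * s) ≤ P + s := by
      have h3 : m * (Q + K * s) ≤ (1 / K) * (Q + K * s) :=
        mul_le_mul_of_nonneg_right hm2 (by linarith)
      have h4 : (1 / K) * (Q + K * s) ≤ P + s := by
        rw [one_div, inv_mul_le_iff₀ hKpos]
        nlinarith
      linarith
    nlinarith
  have part2 : (⨅ j, (T0 j : ℝ)) / (t0 + K - 1) ≤ m := by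
    apply le_min
    · exact div_le_div₀ (by linarith) (hinf_le i) hd1pos (by linarith)
    · rw [div_le_div_iff₀ hd2pos hKpos]
      nlinarith
  refine ⟨part1, part2, ?_⟩
  have hx1 : (⨅ j, (T0 j : ℝ)) / (t0 + K - 1) ∈ Set.Icc (0 : ℝ) 1 := by
    constructor
    · exact div_nonneg (by linarith) hd2pos.le
    · rw [div_le_one hd2pos]
      have := hinf_le i
      linarith
  have hx2 : ((T0 i : ℝ) + P + s) / (t0 + Q + K * s + b) ∈ Set.Icc (0 : ℝ) 1 :=
    ⟨div_nonneg (by linarith) hDpos.le, hfrac_le_one⟩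
  exact hmono hx1 hx2 (le_trans part2 part1)
end
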